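/- Every element f = (f₁, f₂) in the uniform closure of L = span{(βᵏ, (2β)ᵏ)ᵀ : k ∈ ℕ} ⊆ C([1,2],ℝ²) satisfies f₁(2) = f₂(1); hence this closure is a proper subspace of C([1,2],ℝ²). -/
import Mathlib


/-- The set `L = {β ↦ (βᵏ, (2β)ᵏ) : k ∈ ℕ} ⊆ C([1,2],ℝ²)`, spanning the reachable set of
the ensemble system with system matrix `β·diag(1,2)` and control vector `(1,1)ᵀ`. -/
noncomputable def Lset : Set C(Set.Icc (1:ℝ) 2, ℝ × ℝ) :=
  Set.range fun k : ℕ => ⟨fun β => ((β : ℝ) ^ k, (2 * (β : ℝ)) ^ k), by fun_prop⟩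

lemma key : ∀ f ∈ closure ((Submodule.span ℝ Lset :
        Submodule ℝ C(Set.Icc (1:ℝ) 2, ℝ × ℝ)) : Set C(Set.Icc (1:ℝ) 2, ℝ × ℝ)),
      (f ⟨2, by norm_num⟩).1 = (f ⟨1, by norm_num⟩).2 := by
  set x2 : Set.Icc (1:ℝ) 2 := ⟨2, by norm_num⟩
  set x1 : Set.Icc (1:ℝ) 2 := ⟨1, by norm_num⟩
  set S : Set C(Set.Icc (1:ℝ) 2, ℝ × ℝ) := {f | (f x2).1 = (f x1).2} with hS
  have hclosed : IsClosed S :=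
    isClosed_eq (by fun_prop) (by fun_prop)
  have hsub : ((Submodule.span ℝ Lset :
      Submodule ℝ C(Set.Icc (1:ℝ) 2, ℝ × ℝ)) : Set C(Set.Icc (1:ℝ) 2, ℝ × ℝ)) ⊆ S := by
    intro f hf
    induction hf using Submodule.span_induction with
    | mem g hg =>
      obtain ⟨k, rfl⟩ := hg
      simp [S, x1, x2, mul_pow]
    | zero => simp [S]
    | add g h _ _ hg hh => simp only [S, Set.mem_setOf_eq, ContinuousMap.add_apply,
        Prod.fst_add, Prod.snd_add] at *; linarith
    | smul c g _ hg => simp only [S, Set.mem_setOf_eq, ContinuousMap.smul_apply,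
        Prod.smul_fst, Prod.smul_snd] at *; rw [hg]
  intro f hf
  exact closure_minimal hsub hclosed hf

theorem stmt2 :
    (∀ f ∈ closure ((Submodule.span ℝ Lset :
        Submodule ℝ C(Set.Icc (1:ℝ) 2, ℝ × ℝ)) : Set C(Set.Icc (1:ℝ) 2, ℝ × ℝ)),
      (f ⟨2, by norm_num⟩).1 = (f ⟨1, by norm_num⟩).2) ∧
    closure ((Submodule.span ℝ Lset :
        Submodule ℝ C(Set.Icc (1:ℝ) 2, ℝ × ℝ)) : Set C(Set.Icc (1:ℝ) 2, ℝ × ℝ)) ≠ Set.univ := by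
  refine ⟨key, ?_⟩
  intro h
  have := key (ContinuousMap.const _ ((1:ℝ), (0:ℝ))) (by rw [h]; trivial)
  simp at this
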